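/- Let p ≥ 1 be an integer and let u_min ∈ (0,1] and C > 0. Let δ : ℕ → ℝ be a nonnegative nonincreasing sequence such that for all k: u_min·δ (k+1) ≤ (δ k - δ (k+1)) + C·(δ k - δ (k+1))^(p/(p+1)), and suppose δ k - δ (k+1) < 1 for all k. Then for all k ≥ 1: δ k ≤ ((1+C)/u_min)^(p+1) · ((1 + p)·(1 + μ0^(1/p)))^p / k^p, where μ0 = (u_min/(1+C))^(p+1)·δ 0. -/

import Mathlib

lemma aux_geom_bound (q : ℕ) (s : ℝ) (hs : 1 ≤ s) :
    s ^ (q + 1) - 1 ≤ ((q : ℝ) + 2) * s ^ q * (s - 1) := by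
  induction q with
  | zero => simp; nlinarith
  | succ n ih =>
    have h0 : (0:ℝ) ≤ s := by linarith
    have h1 : 1 ≤ s ^ (n + 1) := one_le_pow₀ hs
    have h2 := mul_le_mul_of_nonneg_left ih h0
    have h3 : 0 ≤ s - 1 := by linarith
    have h5 : s ^ (n+1+1) - s ≤ ((n:ℝ) + 2) * s ^ (n+1) * (s - 1) := by
      calc s ^ (n+1+1) - s = s * (s ^ (n+1) - 1) := by ring
        _ ≤ s * ((↑n + 2) * s ^ n * (s - 1)) := h2
        _ = ((n:ℝ) + 2) * s ^ (n+1) * (s - 1) := by ring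
    have h6 : (s - 1) * 1 ≤ (s - 1) * s ^ (n+1) := mul_le_mul_of_nonneg_left h1 h3
    push_cast
    nlinarith [h5, h6]

theorem nhota_convex_sublinear_case
    (p : ℕ) (hp : 1 ≤ p) (u_min C : ℝ)
    (humin : 0 < u_min ∧ u_min ≤ 1) (hC : 0 < C)
    (δ : ℕ → ℝ) (hnn : ∀ k : ℕ, 0 ≤ δ k) (hmono : ∀ k : ℕ, δ (k + 1) ≤ δ k)
    (hrec : ∀ k : ℕ, u_min * δ (k + 1) ≤
      (δ k - δ (k + 1)) + C * (δ k - δ (k + 1)) ^ ((p : ℝ) / (p + 1)))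
    (hgap : ∀ k : ℕ, δ k - δ (k + 1) < 1) :
    ∀ k : ℕ, 1 ≤ k →
      δ k ≤ ((1 + C) / u_min) ^ (p + 1) *
        ((1 + (p : ℝ)) * (1 + ((u_min / (1 + C)) ^ (p + 1) * δ 0) ^ (1 / (p : ℝ)))) ^ p /
          (k : ℝ) ^ p := by
  obtain ⟨hu0, hu1⟩ := humin
  have hC1 : (0:ℝ) < 1 + C := by linarith
  have hpR : (1:ℝ) ≤ (p:ℝ) := by exact_mod_cast hp
  have hp0 : (0:ℝ) < (p:ℝ) := by linarith
  set c0 : ℝ := u_min / (1 + C) with hc0def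
  have hc0 : 0 < c0 := div_pos hu0 hC1
  have hc0p : (0:ℝ) < c0 ^ (p+1) := pow_pos hc0 _
  set μ : ℕ → ℝ := fun k => c0 ^ (p+1) * δ k with hμdef
  have hμnn : ∀ k, 0 ≤ μ k := fun k => mul_nonneg hc0p.le (hnn k)
  have hμmono : ∀ k, μ (k+1) ≤ μ k := fun k =>
    mul_le_mul_of_nonneg_left (hmono k) hc0p.le
  set b : ℕ → ℝ := fun k => (μ k) ^ (1/(p:ℝ)) with hbdef
  have hbnn : ∀ k, 0 ≤ b k := fun k => Real.rpow_nonneg (hμnn k) _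
  have hbpow : ∀ k, (b k) ^ p = μ k := by
    intro k
    show ((μ k) ^ (1/(p:ℝ))) ^ p = μ k
    rw [← Real.rpow_natCast ((μ k) ^ (1/(p:ℝ))) p, ← Real.rpow_mul (hμnn k),
      one_div_mul_cancel hp0.ne', Real.rpow_one]
  have hbmono : ∀ k, b (k+1) ≤ b k := fun k =>
    Real.rpow_le_rpow (hμnn _) (hμmono k) (by positivity)
  have hbT : ∀ k, b k ≤ b 0 := by
    intro k
    induction k with
    | zero => exact le_refl _
    | succ n ih => exact (hbmono n).trans ih
  -- key recurrence
  have hkey : ∀ k, μ (k+1) * (1 + b (k+1)) ≤ μ k := by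
    intro k
    have hx0 : 0 ≤ δ k - δ (k+1) := sub_nonneg.2 (hmono k)
    have hx1 : δ k - δ (k+1) ≤ 1 := (hgap k).le
    have he1 : (p:ℝ)/((p:ℝ)+1) ≤ 1 := by
      rw [div_le_one (by linarith)]; linarith
    have he0 : 0 < (p:ℝ)/((p:ℝ)+1) := by positivity
    have hxe : δ k - δ (k+1) ≤ (δ k - δ (k+1)) ^ ((p:ℝ)/((p:ℝ)+1)) := by
      rcases eq_or_lt_of_le hx0 with h|h
      · rw [← h, Real.zero_rpow he0.ne']
      · calc δ k - δ (k+1) = (δ k - δ (k+1)) ^ (1:ℝ) := (Real.rpow_one _).symm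
          _ ≤ (δ k - δ (k+1)) ^ ((p:ℝ)/((p:ℝ)+1)) :=
            Real.rpow_le_rpow_of_exponent_ge h hx1 he1
    have h1 : c0 * δ (k+1) ≤ (δ k - δ (k+1)) ^ ((p:ℝ)/((p:ℝ)+1)) := by
      rw [hc0def, div_mul_eq_mul_div, div_le_iff₀ hC1]
      nlinarith [hrec k, hxe, Real.rpow_nonneg hx0 ((p:ℝ)/((p:ℝ)+1))]
    have h2 : (c0 * δ (k+1)) ^ (((p:ℝ)+1)/(p:ℝ)) ≤ δ k - δ (k+1) := by
      have hl : 0 ≤ c0 * δ (k+1) := mul_nonneg hc0.le (hnn _)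
      have hee : (p:ℝ)/((p:ℝ)+1) * (((p:ℝ)+1)/(p:ℝ)) = 1 := by
        field_simp
      calc (c0 * δ (k+1)) ^ (((p:ℝ)+1)/(p:ℝ))
          ≤ ((δ k - δ (k+1)) ^ ((p:ℝ)/((p:ℝ)+1))) ^ (((p:ℝ)+1)/(p:ℝ)) :=
            Real.rpow_le_rpow hl h1 (by positivity)
        _ = δ k - δ (k+1) := by
            rw [← Real.rpow_mul hx0, hee, Real.rpow_one]
    have h3 : μ (k+1) * b (k+1) ≤ c0 ^ (p+1) * (δ k - δ (k+1)) := by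
      rcases eq_or_lt_of_le (hμnn (k+1)) with h|h
      · rw [← h]
        simp only [zero_mul]
        exact mul_nonneg hc0p.le hx0
      · have heq : μ (k+1) * b (k+1)
            = c0 ^ (p+1) * (c0 * δ (k+1)) ^ (((p:ℝ)+1)/(p:ℝ)) := by
          show μ (k+1) * (μ (k+1)) ^ (1/(p:ℝ)) = _
          have hsplit : μ (k+1) = c0 ^ p * (c0 * δ (k+1)) := by
            show c0 ^ (p+1) * δ (k+1) = _
            ring
          have hδnn : 0 ≤ c0 * δ (k+1) := mul_nonneg hc0.le (hnn _)
          have e1 : μ (k+1) * (μ (k+1)) ^ (1/(p:ℝ)) = (μ (k+1)) ^ (1 + 1/(p:ℝ)) := by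
            rw [Real.rpow_add h, Real.rpow_one]
          have e2 : (c0 ^ p : ℝ) ^ (1 + 1/(p:ℝ)) = c0 ^ (p+1) := by
            rw [← Real.rpow_natCast c0 p, ← Real.rpow_mul hc0.le]
            rw [show (p:ℝ) * (1 + 1/(p:ℝ)) = ((p:ℝ)+1) by field_simp]
            rw [show ((p:ℝ)+1) = ((p+1:ℕ):ℝ) by push_cast; ring, Real.rpow_natCast]
          have e3 : 1 + 1/(p:ℝ) = ((p:ℝ)+1)/(p:ℝ) := by field_simp
          rw [e1, hsplit, Real.mul_rpow (pow_nonneg hc0.le p) hδnn, e2, e3]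
        rw [heq]
        exact mul_le_mul_of_nonneg_left h2 hc0p.le
    have hsum : μ k = μ (k+1) + c0 ^ (p+1) * (δ k - δ (k+1)) := by
      show c0 ^ (p+1) * δ k = c0 ^ (p+1) * δ (k+1) + _
      ring
    nlinarith [h3]
  -- abbreviations for the rate constant
  set T : ℝ := b 0 with hTdef
  have hT0 : 0 ≤ T := hbnn 0
  clear_value μ
  clear_value T
  have hDpos : 0 < (1+(p:ℝ))*(1+T) := mul_pos (by linarith) (by linarith)
  set c : ℝ := 1/((1+(p:ℝ))*(1+T)) with hcdef
  have hc_pos : 0 < c := by rw [hcdef]; exact one_div_pos.2 hDpos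
  have hcD : c * ((1+(p:ℝ))*(1+T)) = 1 := by
    rw [hcdef, one_div_mul_cancel hDpos.ne']
  clear_value c
  -- one-step increase of 1/b
  have step : ∀ k, 0 < b (k+1) → 1 / b k + c ≤ 1 / b (k+1) := by
    intro k hβ
    have hβT : b (k+1) ≤ T := hbT (k+1)
    set β := b (k+1) with hβdef
    have hβ1 : (1:ℝ) ≤ 1 + β := by linarith
    set s : ℝ := (1+β) ^ (1/(p:ℝ)) with hsdef
    have hs1 : 1 ≤ s := Real.one_le_rpow hβ1 (by positivity)
    have hs0 : 0 < s := by linarith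
    have hsp : s ^ p = 1 + β := by
      rw [hsdef, ← Real.rpow_natCast ((1+β) ^ (1/(p:ℝ))) p,
        ← Real.rpow_mul (by linarith : (0:ℝ) ≤ 1+β),
        one_div_mul_cancel hp0.ne', Real.rpow_one]
    clear_value s
    have hmulp : (β * s) ^ p ≤ (b k) ^ p := by
      rw [mul_pow, hsp, hbpow, hbpow]
      exact hkey k
    have hmul : β * s ≤ b k := by
      by_contra hcon
      push_neg at hcon
      have := pow_lt_pow_left₀ hcon (hbnn k) (by omega : p ≠ 0)
      linarith
    have hbk : 0 < b k := lt_of_lt_of_le (mul_pos hβ hs0) hmul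
    -- key inequality: c * (β * s) ≤ s - 1
    obtain ⟨q, hq⟩ : ∃ q, p = q + 1 := ⟨p-1, (Nat.succ_pred_eq_of_pos hp).symm⟩
    have hA := aux_geom_bound q s hs1
    have hq2 : ((q:ℝ)+2) = (p:ℝ)+1 := by rw [hq]; push_cast; ring
    have hsq1 : s ^ (q+1) = 1 + β := by rw [← hq, hsp]
    have hsqq : s ^ q * s = 1 + β := by
      rw [← pow_succ, hsq1]
    have hβle : β ≤ ((p:ℝ)+1) * s ^ q * (s - 1) := by
      have hh : s ^ (q+1) - 1 = β := by rw [hsq1]; ring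
      rw [← hh, ← hq2]; exact hA
    have h6 : c * (((p:ℝ)+1) * (1+β)) ≤ 1 := by
      rw [hcdef]
      rw [div_mul_eq_mul_div, div_le_one hDpos, one_mul]
      have : ((p:ℝ)+1) * (1+β) ≤ ((p:ℝ)+1) * (1+T) := by
        apply mul_le_mul_of_nonneg_left (by linarith) (by linarith)
      linarith [this]
    have h5 : c * (β * s) ≤ s - 1 := by
      have e1 : c * (β * s) ≤ c * ((((p:ℝ)+1) * s ^ q * (s-1)) * s) := by
        apply mul_le_mul_of_nonneg_left _ hc_pos.le
        apply mul_le_mul_of_nonneg_right hβle hs0.le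
      have e2 : (((p:ℝ)+1) * s ^ q * (s-1)) * s = (((p:ℝ)+1) * (1+β)) * (s-1) := by
        rw [← hsqq]; ring
      have e3 : c * ((((p:ℝ)+1) * (1+β)) * (s-1)) ≤ 1 * (s-1) := by
        rw [← mul_assoc]
        exact mul_le_mul_of_nonneg_right h6 (by linarith)
      calc c * (β * s) ≤ c * ((((p:ℝ)+1) * s ^ q * (s-1)) * s) := e1
        _ = c * ((((p:ℝ)+1) * (1+β)) * (s-1)) := by rw [e2]
        _ ≤ 1 * (s-1) := e3
        _ = s - 1 := one_mul _
    -- combine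
    have hβs : 0 < β * s := mul_pos hβ hs0
    have l1 : 1 / b k ≤ 1 / (β * s) := one_div_le_one_div_of_le hβs hmul
    have l2 : 1 / (β * s) + c ≤ 1 / β := by
      have h7 : 1 / (β * s) + c = (1 + c * (β * s)) / (β * s) := by
        field_simp
      have h8 : 1 + c * (β * s) ≤ s := by linarith [h5]
      have h9 : s / (β * s) = 1 / β := by
        rw [div_eq_div_iff hβs.ne' hβ.ne']
        ring
      rw [h7, ← h9]
      exact div_le_div_of_nonneg_right h8 hβs.le
    linarith
  -- main claim by induction
  have claim : ∀ m : ℕ, c * ((m:ℝ)+1) * b (m+1) ≤ 1 := by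
    intro m
    induction m with
    | zero =>
      have hb1 : b 1 ≤ T := hbT 1
      have hTle : T ≤ (1+(p:ℝ))*(1+T) := by nlinarith [mul_nonneg hp0.le hT0]
      have hcT : c * T ≤ 1 := by
        calc c * T ≤ c * ((1+(p:ℝ))*(1+T)) :=
              mul_le_mul_of_nonneg_left hTle hc_pos.le
          _ = 1 := hcD
      push_cast
      calc c * (0+1) * b (0+1) = c * b 1 := by norm_num
        _ ≤ c * T := mul_le_mul_of_nonneg_left hb1 hc_pos.le
        _ ≤ 1 := hcT
    | succ n ih =>
      rcases (hbnn (n+2)).lt_or_eq with hpos|hzero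
      · have h1 := step (n+1) hpos
        have hbpos : 0 < b (n+1) := lt_of_lt_of_le hpos (hbmono (n+1))
        have h2 : c * ((n:ℝ)+1) ≤ 1 / b (n+1) := by
          rw [le_div_iff₀ hbpos]
          exact ih
        have h3 : c * ((n:ℝ)+1+1) ≤ 1 / b (n+2) := by
          have := add_le_add_right h2 c
          have hexp : c * ((n:ℝ)+1+1) = c * ((n:ℝ)+1) + c := by ring
          linarith [h1]
        have h4 : c * ((n:ℝ)+1+1) * b (n+2) ≤ (1 / b (n+2)) * b (n+2) :=
          mul_le_mul_of_nonneg_right h3 (hbnn (n+2))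
        have h5 : (1 / b (n+2)) * b (n+2) = 1 := one_div_mul_cancel hpos.ne'
        push_cast
        calc c * ((n:ℝ)+1+1) * b (n+1+1) ≤ (1 / b (n+2)) * b (n+2) := h4
          _ = 1 := h5
      · push_cast
        rw [show n+1+1 = n+2 from rfl, ← hzero, mul_zero]
        norm_num
  -- conclude
  intro k hk
  obtain ⟨m, rfl⟩ : ∃ m, k = m + 1 := ⟨k-1, (Nat.succ_pred_eq_of_pos hk).symm⟩
  have hclaim := claim m
  have hm1 : (0:ℝ) < (m:ℝ)+1 := by positivity
  have hb_le : b (m+1) * ((m:ℝ)+1) ≤ (1+(p:ℝ))*(1+T) := by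
    have hmm := mul_le_mul_of_nonneg_left hclaim hDpos.le
    calc b (m+1) * ((m:ℝ)+1)
        = ((1+(p:ℝ))*(1+T)) * (c * ((m:ℝ)+1) * b (m+1)) := by
          rw [hcdef]; field_simp
      _ ≤ ((1+(p:ℝ))*(1+T)) * 1 := hmm
      _ = (1+(p:ℝ))*(1+T) := mul_one _
  have hb_le' : b (m+1) ≤ ((1+(p:ℝ))*(1+T)) / ((m:ℝ)+1) := by
    rw [le_div_iff₀ hm1]
    exact hb_le
  have hμ_le : μ (m+1) ≤ (((1+(p:ℝ))*(1+T)) / ((m:ℝ)+1)) ^ p := by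
    rw [← hbpow (m+1)]
    exact pow_le_pow_left₀ (hbnn _) hb_le' p
  have hδeq : δ (m+1) = μ (m+1) / c0 ^ (p+1) := by
    simp only [hμdef]
    field_simp
  have hTeq : T = (c0 ^ (p + 1) * δ 0) ^ (1 / (p : ℝ)) := by
    rw [hTdef]
    simp only [hbdef, hμdef]
  have hrhs : ((1 + C) / u_min) ^ (p + 1) *
        ((1 + (p : ℝ)) * (1 + (c0 ^ (p + 1) * δ 0) ^ (1 / (p : ℝ)))) ^ p /
          ((m+1 : ℕ) : ℝ) ^ p
      = ((((1+(p:ℝ))*(1+T)) / ((m:ℝ)+1)) ^ p) / c0 ^ (p+1) := by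
    have hinv : ((1 + C) / u_min) = 1 / c0 := by
      rw [hc0def, one_div_div]
    rw [hinv, ← hTeq, div_pow, div_pow, one_pow]
    push_cast
    field_simp
    rw [← mul_pow]; congr 1; field_simp
  rw [hδeq]
  calc μ (m+1) / c0 ^ (p+1)
      ≤ ((((1+(p:ℝ))*(1+T)) / ((m:ℝ)+1)) ^ p) / c0 ^ (p+1) :=
        div_le_div_of_nonneg_right hμ_le hc0p.le |>.trans_eq rfl
    _ = _ := hrhs.symm
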